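/- The uniform law on [-√3, √3] is sharp sub-Gaussian: it is centered with unit variance, and for every real t, ∫ e^{tx} dμ(x) = sinh(√3 t)/(√3 t) ≤ e^{t²/2} (with value 1 at t = 0). -/

import Mathlib

open MeasureTheory Real
open scoped ENNReal

lemma hasSum_exp_real' (x : ℝ) : HasSum (fun n => x ^ n / n.factorial) (Real.exp x) := by
  rw [Real.exp_eq_exp_ℝ]
  exact NormedSpace.expSeries_div_hasSum_exp x

lemma hasSum_sinh' (x : ℝ) :
    HasSum (fun k : ℕ => x ^ (2 * k + 1) / (2 * k + 1).factorial) (Real.sinh x) := by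
  have h1 := hasSum_exp_real' x
  have h2 := hasSum_exp_real' (-x)
  have h := (h1.sub h2).div_const 2
  rw [← Real.sinh_eq] at h
  rw [← Function.Injective.hasSum_iff (g := fun k : ℕ => 2 * k + 1)
      (fun a b hab => by simpa using hab) ?_] at h
  · convert h using 2 with k
    · rfl
    simp only [Function.comp]
    rw [Odd.neg_pow ⟨k, by ring⟩]
    ring
  · intro n hn
    rcases Nat.even_or_odd n with he | ho
    · rw [he.neg_pow]; ring
    · obtain ⟨m, hm⟩ := ho
      exact absurd (Set.mem_range.mpr ⟨m, by simp [hm]⟩) hn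

lemma six_pow_mul_factorial_le (k : ℕ) : 6 ^ k * k.factorial ≤ (2 * k + 1).factorial := by
  induction k with
  | zero => simp
  | succ n ih =>
    have key : (2 * (n + 1) + 1).factorial
        = (2 * n + 3) * ((2 * n + 2) * (2 * n + 1).factorial) := by
      rw [show 2 * (n + 1) + 1 = (2 * n + 2) + 1 by ring, Nat.factorial_succ,
        show 2 * n + 2 = (2 * n + 1) + 1 by ring, Nat.factorial_succ]
    rw [key, Nat.factorial_succ]
    calc 6 ^ (n + 1) * ((n + 1) * n.factorial) = (6 * (n + 1)) * (6 ^ n * n.factorial) := by ring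
    _ ≤ ((2 * n + 3) * (2 * n + 2)) * (2 * n + 1).factorial := by
        exact Nat.mul_le_mul (by nlinarith) ih
    _ = (2 * n + 3) * ((2 * n + 2) * (2 * n + 1).factorial) := by ring

lemma sinh_div_le' (a : ℝ) (ha : a ≠ 0) :
    Real.sinh a / a ≤ Real.exp (a ^ 2 / 6) := by
  have hs : HasSum (fun k : ℕ => a ^ (2 * k) / (2 * k + 1).factorial) (Real.sinh a / a) := by
    have := (hasSum_sinh' a).div_const a
    convert this using 2 with k
    · rfl
    rw [pow_succ]
    field_simp
  have he : HasSum (fun n : ℕ => (a ^ 2 / 6) ^ n / n.factorial) (Real.exp (a ^ 2 / 6)) :=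
    hasSum_exp_real' _
  refine hasSum_le (fun k => ?_) hs he
  have h1 : (a ^ 2 / 6) ^ k / (k.factorial : ℝ) = a ^ (2 * k) / (6 ^ k * k.factorial) := by
    rw [div_pow, ← pow_mul]
    field_simp
  rw [h1]
  have h3 : ((6:ℝ) ^ k * k.factorial) ≤ ((2 * k + 1).factorial : ℝ) := by
    have := six_pow_mul_factorial_le k
    calc ((6:ℝ) ^ k * k.factorial) = ((6 ^ k * k.factorial : ℕ) : ℝ) := by push_cast; ring
    _ ≤ ((2 * k + 1).factorial : ℝ) := by exact_mod_cast this
  have h4 : (0:ℝ) ≤ a ^ (2 * k) := by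
    rw [pow_mul]; positivity
  gcongr

lemma integral_exp_mul_real (t a b : ℝ) (ht : t ≠ 0) :
    ∫ x in a..b, Real.exp (t * x) = (Real.exp (t * b) - Real.exp (t * a)) / t := by
  have D : ∀ x : ℝ, HasDerivAt (fun y : ℝ => Real.exp (t * y) / t) (Real.exp (t * x)) x := by
    intro x
    have h1 : HasDerivAt (fun y : ℝ => t * y) t x := by
      simpa using (hasDerivAt_id x).const_mul t
    have h2 := (Real.hasDerivAt_exp (t * x)).comp x h1
    have h3 := h2.div_const t
    simpa [mul_comm, mul_div_assoc, mul_div_cancel_left₀ _ ht] using h3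
  have := intervalIntegral.integral_eq_sub_of_hasDerivAt (f := fun y => Real.exp (t * y) / t)
    (fun x _ => D x)
    ((Real.continuous_exp.comp (continuous_const.mul continuous_id)).intervalIntegrable a b)
  rw [this]
  ring

lemma integral_unif (c : ℝ) (hc : 0 < c) (f : ℝ → ℝ) :
    ∫ x, f x ∂((ENNReal.ofReal (2 * c))⁻¹ • volume.restrict (Set.Icc (-c) c))
      = (2 * c)⁻¹ * ∫ x in (-c)..c, f x := by
  rw [integral_smul_measure, ENNReal.toReal_inv, ENNReal.toReal_ofReal (by linarith),
    smul_eq_mul, MeasureTheory.integral_Icc_eq_integral_Ioc,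
    ← intervalIntegral.integral_of_le (by linarith : -c ≤ c)]

/-- The uniform law on `[-√3, √3]` is sharp sub-Gaussian: it is centered with unit
variance, and for every real `t`, `∫ e^{tx} dμ(x) = sinh(√3 t)/(√3 t) ≤ e^{t²/2}`
(with value `1` at `t = 0`). -/
theorem uniform_sharp_subGaussian
    (μ : Measure ℝ)
    (hμ : μ = (ENNReal.ofReal (2 * Real.sqrt 3))⁻¹ •
      (volume.restrict (Set.Icc (-Real.sqrt 3) (Real.sqrt 3)))) :
    (∫ x, x ∂μ) = 0 ∧ (∫ x, x ^ 2 ∂μ) = 1 ∧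
      ∀ t : ℝ,
        (t ≠ 0 → (∫ x, Real.exp (t * x) ∂μ)
          = Real.sinh (Real.sqrt 3 * t) / (Real.sqrt 3 * t)) ∧
        (t = 0 → (∫ x, Real.exp (t * x) ∂μ) = 1) ∧
        (∫ x, Real.exp (t * x) ∂μ) ≤ Real.exp (t ^ 2 / 2) := by
  subst hμ
  set c : ℝ := Real.sqrt 3 with hcdef
  have hc : 0 < c := Real.sqrt_pos.mpr (by norm_num)
  have hc' : c ≠ 0 := ne_of_gt hc
  have hc2 : c ^ 2 = 3 := Real.sq_sqrt (by norm_num)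
  have hmgf : ∀ t : ℝ, t ≠ 0 →
      (∫ x, Real.exp (t * x)
        ∂((ENNReal.ofReal (2 * c))⁻¹ • volume.restrict (Set.Icc (-c) c)))
        = Real.sinh (c * t) / (c * t) := by
    intro t ht
    rw [integral_unif c hc, integral_exp_mul_real t _ _ ht, Real.sinh_eq]
    have h1 : t * -c = -(c * t) := by ring
    have h2 : t * c = c * t := by ring
    rw [h1, h2]
    set E : ℝ := Real.exp (c * t) - Real.exp (-(c * t)) with hE
    rw [div_div, eq_div_iff (by positivity : (2:ℝ) * (c * t) ≠ 0), div_eq_mul_inv]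
    calc (2 * c)⁻¹ * (E * t⁻¹) * (2 * (c * t))
        = E * ((2 * c) * (2 * c)⁻¹) * (t * t⁻¹) := by ring
      _ = E := by
          rw [mul_inv_cancel₀ (by positivity : (2:ℝ) * c ≠ 0), mul_inv_cancel₀ ht]; ring
  refine ⟨?_, ?_, fun t => ?_⟩
  · rw [integral_unif c hc, integral_id]
    ring
  · rw [integral_unif c hc, integral_pow]
    have h3 : c ^ 3 = 3 * c := by nlinarith
    have h4 : c ^ (2 + 1) - (-c) ^ (2 + 1) = 6 * c := by linear_combination 2 * h3
    rw [h4]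
    push_cast
    have h5 : (6:ℝ) * c / (2 + 1) = 2 * c := by ring
    rw [h5, inv_mul_cancel₀ (by positivity : (2:ℝ) * c ≠ 0)]
  · have hone : (∫ x, Real.exp ((0:ℝ) * x)
        ∂((ENNReal.ofReal (2 * c))⁻¹ • volume.restrict (Set.Icc (-c) c))) = 1 := by
      simp only [zero_mul, Real.exp_zero]
      rw [integral_unif c hc, intervalIntegral.integral_const, smul_eq_mul, mul_one,
        show c - -c = 2 * c by ring, inv_mul_cancel₀ (by positivity : (2:ℝ) * c ≠ 0)]
    refine ⟨hmgf t, fun ht0 => by rw [ht0]; exact hone, ?_⟩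
    rcases eq_or_ne t 0 with ht0 | ht0
    · rw [ht0, hone]
      rw [show (0:ℝ) ^ 2 / 2 = 0 by norm_num, Real.exp_zero]
    · rw [hmgf t ht0]
      have h5 : (c * t) ^ 2 / 6 = t ^ 2 / 2 := by
        rw [mul_pow, hc2]; ring
      rw [← h5]
      exact sinh_div_le' (c * t) (mul_ne_zero (ne_of_gt hc) ht0)
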